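/- Let κ, T ∈ ℝ and α, β ∈ ℂ with α + β ≠ 0. If 1 − α² − 2κ cos(αT) = 0 and 1 − β² − 2κ cos(βT) = 0, then iα − iκ·(e^{iβT} − e^{−iαT})/(α+β) = iβ − iκ·(e^{iαT} − e^{−iβT})/(α+β). -/

import Mathlib

/-- Symmetry ω_{αβ} = ω_{βα} of the symplectic-form coefficients of the delayed
non-local harmonic oscillator for spectral roots α, β with α + β ≠ 0. -/
theorem stmt13 (κ T : ℝ) (α β : ℂ) (hαβ : α + β ≠ 0)
    (hα : 1 - α ^ 2 - 2 * (κ : ℂ) * Complex.cos (α * T) = 0)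
    (hβ : 1 - β ^ 2 - 2 * (κ : ℂ) * Complex.cos (β * T) = 0) :
    Complex.I * α - Complex.I * (κ : ℂ) *
        (Complex.exp (Complex.I * β * T) - Complex.exp (-(Complex.I * α * T))) / (α + β)
      = Complex.I * β - Complex.I * (κ : ℂ) *
        (Complex.exp (Complex.I * α * T) - Complex.exp (-(Complex.I * β * T))) / (α + β) := by
  have eα : Complex.cos (α * T) =
      (Complex.exp (Complex.I * α * T) + Complex.exp (-(Complex.I * α * T))) / 2 := by
    rw [Complex.cos]; ring_nf
  have eβ : Complex.cos (β * T) =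
      (Complex.exp (Complex.I * β * T) + Complex.exp (-(Complex.I * β * T))) / 2 := by
    rw [Complex.cos]; ring_nf
  rw [eα] at hα
  rw [eβ] at hβ
  field_simp
  linear_combination hβ - hα
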